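/- Let θ_c' be the unique real root of t³ + t² + 3t − 1 = 0, let 0 < θ ≤ θ_c', and let x > 0 be such that ξ = x + 1/x satisfies the quadratic θ³ξ² + θ(3θ² − 1)ξ + 2θ³ − 2θ + 1 = 0. Then (1 − θ²)x − θ²(x² + 1) > 0. -/

import Mathlib

/-- If `θ_c'` is the unique real root of `t³ + t² + 3t - 1 = 0`,
`0 < θ ≤ θ_c'`, and `x > 0` is such that `ξ = x + 1/x` solves the quadratic
`θ³ξ² + θ(3θ² - 1)ξ + 2θ³ - 2θ + 1 = 0`, then `(1 - θ²)x - θ²(x² + 1) > 0`. -/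
theorem sos_y_squared_positive (θc' θ x : ℝ)
    (hroot : θc' ^ 3 + θc' ^ 2 + 3 * θc' - 1 = 0)
    (huniq : ∀ t : ℝ, t ^ 3 + t ^ 2 + 3 * t - 1 = 0 → t = θc')
    (hθ0 : 0 < θ) (hθ : θ ≤ θc') (hx : 0 < x)
    (hξ : θ ^ 3 * (x + 1 / x) ^ 2 + θ * (3 * θ ^ 2 - 1) * (x + 1 / x)
        + 2 * θ ^ 3 - 2 * θ + 1 = 0) :
    0 < (1 - θ ^ 2) * x - θ ^ 2 * (x ^ 2 + 1) := by
  have hx0 : x ≠ 0 := ne_of_gt hx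
  have hξ' : θ ^ 3 * (x ^ 2 + 1) ^ 2 * x + θ * (3 * θ ^ 2 - 1) * (x ^ 2 + 1) * x ^ 2
      + (2 * θ ^ 3 - 2 * θ + 1) * x ^ 3 = 0 := by
    field_simp at hξ
    linear_combination x * hξ
  have key : ((1 - θ ^ 2) * x - θ ^ 2 * (x ^ 2 + 1)) * (θ * (x + 1) ^ 2 * x) = x ^ 3 := by
    linear_combination -hξ'
  have hpos : 0 < θ * (x + 1) ^ 2 * x := by positivity
  nlinarith [key, hpos, pow_pos hx 3]
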